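/- Let G be a finite group with an abelian subgroup A of index s = [G : A], and suppose there exists an injective group homomorphism from A into GL_d(ℂ). Set m = d·s. Then there exists an injective group homomorphism from G into the semidirect product (ℂ*)^m ⋊ Sym_m, where the symmetric group Sym_m acts on the m-fold direct product (ℂ*)^m of the multiplicative group ℂ* by permuting the factors. -/

import Mathlib

/-- The permutation action of `Sym_m` on `(ℂ*)^m`, permuting the factors. -/
def permAut (m : ℕ) : Equiv.Perm (Fin m) →* MulAut (Fin m → ℂˣ) where
  toFun σ :=
    { toFun := fun v => v ∘ σ.symm
      invFun := fun v => v ∘ σ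
      left_inv := fun v => by ext i; simp
      right_inv := fun v => by ext i; simp
      map_mul' := fun v w => rfl }
  map_one' := by ext v i; simp [Equiv.Perm.one_def]
  map_mul' σ τ := by
    ext v i
    simp [Equiv.Perm.mul_def, Equiv.symm_trans_apply]

open Module End Polynomial

lemma abelian_diag {A : Type} [Group A] [Finite A]
    (hA : ∀ x y : A, x * y = y * x) (d : ℕ)
    (f : A →* Matrix.GeneralLinearGroup (Fin d) ℂ) (hf : Function.Injective f) :
    ∃ φ : A →* (Fin d → ℂˣ), Function.Injective φ := by
  classical
  set M : Type := Fin d → ℂ with hM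
  set F : A → Module.End ℂ M := fun a => Matrix.toLin' (f a : Matrix (Fin d) (Fin d) ℂ) with hF
  have hFmul : ∀ a b : A, F (a * b) = F a * F b := by
    intro a b
    simp only [hF, map_mul, Units.val_mul, Matrix.toLin'_mul]
    rfl
  have hFone : F 1 = 1 := by
    simp only [hF, map_one, Units.val_one, Matrix.toLin'_one]
    rfl
  -- each F a is semisimple
  have hsemi : ∀ a : A, (F a).IsFinitelySemisimple := by
    intro a
    refine Module.End.IsSemisimple.isFinitelySemisimple ?_
    refine Module.End.isSemisimple_of_squarefree_aeval_eq_zero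
      (p := X ^ (orderOf a) - 1)
      ((Polynomial.X_pow_sub_one_separable_iff.mpr ?_).squarefree) ?_
    · exact_mod_cast Nat.cast_ne_zero.mpr (orderOf_pos a).ne'
    · have : F a ^ (orderOf a) = 1 := by
        have h1 : a ^ (orderOf a) = 1 := pow_orderOf_eq_one a
        have : ∀ n : ℕ, F (a ^ n) = F a ^ n := by
          intro n
          induction n with
          | zero => simpa using hFone
          | succ n ih => rw [pow_succ, pow_succ, hFmul, ih]
        rw [← this, h1, hFone]
      simp [map_sub, map_pow, aeval_X, aeval_one, this]
  -- simultaneous eigenspaces span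
  set W : (A → ℂ) → Submodule ℂ M := fun χ => ⨅ a, (F a).maxGenEigenspace (χ a) with hW
  have htop : ⨆ χ : A → ℂ, W χ = ⊤ := by
    refine Module.End.iSup_iInf_maxGenEigenspace_eq_top_of_iSup_maxGenEigenspace_eq_top_of_commute
      F (fun a b _ => ?_) (fun a => Module.End.iSup_maxGenEigenspace_eq_top (F a))
    show F a * F b = F b * F a
    rw [← hFmul, ← hFmul, hA]
  -- eigen property
  have heig : ∀ (χ : A → ℂ) (v : M), v ∈ W χ → ∀ a : A, F a v = χ a • v := by
    intro χ v hv a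
    have hv' : v ∈ (F a).maxGenEigenspace (χ a) := by
      exact (Submodule.mem_iInf _).mp hv a
    rw [(hsemi a).maxGenEigenspace_eq_eigenspace] at hv'
    exact Module.End.mem_eigenspace_iff.mp hv'
  -- extract a basis of simultaneous eigenvectors
  set U : Set M := ⋃ χ : A → ℂ, (W χ : Set M) with hU
  have hspanU : Submodule.span ℂ U = ⊤ := by
    rw [hU, Submodule.span_iUnion]
    simpa [Submodule.span_eq] using htop
  obtain ⟨b, hbU, hbspan, hbli⟩ := exists_linearIndependent ℂ U
  rw [hspanU] at hbspan
  let B : Basis b ℂ M := Basis.mk hbli (by rw [Subtype.range_coe, hbspan])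
  have : Fintype b := FiniteDimensional.fintypeBasisIndex B
  have hcard : Fintype.card b = d := by
    have := Module.finrank_eq_card_basis B
    rw [show finrank ℂ M = d from finrank_fin_fun ℂ] at this
    omega
  set eqv : b ≃ Fin d := Fintype.equivFinOfCardEq hcard with heqv
  -- choose characters
  have hch : ∀ j : b, ∃ χ : A → ℂ, (j : M) ∈ W χ := by
    intro j
    have := hbU j.2
    exact Set.mem_iUnion.mp this
  choose χs hχs using hch
  have hne : ∀ j : b, (j : M) ≠ 0 := fun j => hbli.ne_zero j
  -- nonvanishing of characters
  have hFinj : ∀ a : A, Function.Injective (F a) := by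
    intro a
    have h1 : F a⁻¹ * F a = 1 := by rw [← hFmul, inv_mul_cancel, hFone]
    intro x y hxy
    have h2 : (F a⁻¹ * F a) x = (F a⁻¹ * F a) y := by
      simp only [Module.End.mul_apply, hxy]
    rwa [h1, Module.End.one_apply, Module.End.one_apply] at h2
  have hχne : ∀ (j : b) (a : A), χs j a ≠ 0 := by
    intro j a h0
    have := heig _ _ (hχs j) a
    rw [h0, zero_smul] at this
    exact hne j (hFinj a (by rw [this, map_zero]))
  -- define φ
  refine ⟨{ toFun := fun a i => Units.mk0 (χs (eqv.symm i) a) (hχne _ a)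
            map_one' := ?_
            map_mul' := ?_ }, ?_⟩
  · ext i
    have h1 := heig _ _ (hχs (eqv.symm i)) 1
    rw [hFone] at h1
    have : χs (eqv.symm i) 1 • ((eqv.symm i : b) : M)
        = (1 : ℂ) • ((eqv.symm i : b) : M) := by
      rw [one_smul]
      rw [Module.End.one_apply] at h1
      exact h1.symm
    have := smul_left_injective ℂ (hne (eqv.symm i)) this
    simp [this]
  · intro x y
    ext i
    set j := eqv.symm i
    have hx := heig _ _ (hχs j) x
    have hy := heig _ _ (hχs j) y
    have hxy := heig _ _ (hχs j) (x * y)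
    have : F (x * y) (j : M) = (χs j x * χs j y) • (j : M) := by
      rw [hFmul]
      show F x (F y (j : M)) = _
      rw [hy, map_smul, hx, smul_smul, mul_comm]
    rw [hxy] at this
    have := smul_left_injective ℂ (hne j) this
    simp [Units.ext_iff, this]
    rfl
  · rw [injective_iff_map_eq_one]
    intro a ha
    have hFa : F a = (1 : Module.End ℂ M) := by
      apply LinearMap.ext_on hbspan
      intro v hv
      have h1 : χs ⟨v, hv⟩ a = 1 := by
        have := congrFun ha (eqv ⟨v, hv⟩)
        rw [Units.ext_iff] at this
        simpa using this
      have := heig _ _ (hχs ⟨v, hv⟩) a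
      simp only [Module.End.one_apply]
      rw [show v = ((⟨v, hv⟩ : b) : M) from rfl, this, h1, one_smul]
    have : f a = 1 := by
      apply Units.ext
      have : Matrix.toLin' ((f a : Matrix (Fin d) (Fin d) ℂ)) =
          Matrix.toLin' (1 : Matrix (Fin d) (Fin d) ℂ) := by
        rw [Matrix.toLin'_one]; exact hFa
      exact Matrix.toLin'.injective this
    exact hf (by rw [this, map_one])

lemma embed_monomial (G : Type) [Group G] [Finite G] (A : Subgroup G)
    (s : ℕ) (hs : s = A.index) (d : ℕ) (hd : 0 < d) (m : ℕ) (hm : m = d * s)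
    (φ : A →* (Fin d → ℂˣ)) (hφ : Function.Injective φ) :
    ∃ g : G →* (Fin m → ℂˣ) ⋊[permAut m] Equiv.Perm (Fin m),
      Function.Injective g := by
  classical
  set T := G ⧸ A with hT
  have hcard : Nat.card (T × Fin d) = m := by
    simp [Nat.card_prod, hm, hs, Subgroup.index_eq_card, mul_comm]
    exact Or.inl rfl
  set e : T × Fin d ≃ Fin m := Finite.equivFinOfCardEq hcard with he
  set σ : G →* Equiv.Perm T := MulAction.toPermHom G T with hσ
  -- the cocycle
  have nmem : ∀ (g : G) (x : T), x.out⁻¹ * g * (g⁻¹ • x).out ∈ A := by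
    intro g x
    have h1 : (QuotientGroup.mk (g * (g⁻¹ • x).out) : G ⧸ A)
        = (QuotientGroup.mk x.out : G ⧸ A) := by
      rw [← smul_eq_mul, MulAction.Quotient.mk_smul_out, QuotientGroup.out_eq',
        smul_smul, mul_inv_cancel, one_smul]
    have := QuotientGroup.eq.mp h1.symm
    rwa [← mul_assoc] at this
  set n : G → T → A := fun g x => ⟨x.out⁻¹ * g * (g⁻¹ • x).out, nmem g x⟩ with hn
  have hn_one : ∀ x : T, n 1 x = 1 := by
    intro x
    apply Subtype.ext
    simp [hn]
  have hn_mul : ∀ (g h : G) (x : T), n g x * n h (g⁻¹ • x) = n (g * h) x := by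
    intro g h x
    apply Subtype.ext
    show (x.out⁻¹ * g * (g⁻¹ • x).out) * ((g⁻¹ • x).out⁻¹ * h * (h⁻¹ • g⁻¹ • x).out)
      = x.out⁻¹ * (g * h) * ((g * h)⁻¹ • x).out
    rw [smul_smul, ← mul_inv_rev]
    group
  set p : G → Equiv.Perm (T × Fin d) := fun g => Equiv.prodCongr (σ g) (Equiv.refl (Fin d))
    with hp
  set τ : G → Equiv.Perm (Fin m) := fun g => e.permCongr (p g) with hτ
  set w : G → Fin m → ℂˣ := fun g i => φ (n g (e.symm i).1) (e.symm i).2 with hw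
  have hτ_one : τ 1 = 1 := by
    ext i
    simp [hτ, hp]
  have hτ_mul : ∀ g h : G, τ (g * h) = τ g * τ h := by
    intro g h
    ext i
    simp [hτ, hp, Equiv.Perm.mul_apply, map_mul, Prod.map_map, Function.comp]
  have hτ_symm : ∀ (g : G) (i : Fin m), (τ g).symm i
      = e ((σ g).symm (e.symm i).1, (e.symm i).2) := by
    intro g i
    apply (τ g).injective
    rw [Equiv.apply_symm_apply]
    simp [hτ, hp, Equiv.permCongr_apply, Equiv.symm_apply_apply, Prod.map]
  have hw_mul : ∀ g h : G, w (g * h) = w g * (w h ∘ (τ g).symm) := by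
    intro g h
    funext i
    show w (g * h) i = w g i * w h ((τ g).symm i)
    rw [hτ_symm]
    simp only [hw, Equiv.symm_apply_apply]
    have hsy : (σ g).symm (e.symm i).1 = g⁻¹ • (e.symm i).1 := by
      simp [hσ, MulAction.toPermHom_apply]
    rw [hsy, ← hn_mul g h (e.symm i).1, map_mul]
    rfl
  refine ⟨{ toFun := fun g => ⟨w g, τ g⟩
            map_one' := ?_
            map_mul' := ?_ }, ?_⟩
  · have hw1 : w 1 = 1 := by
      funext i
      simp [hw, hn_one, map_one]
    show (⟨w 1, τ 1⟩ : (Fin m → ℂˣ) ⋊[permAut m] Equiv.Perm (Fin m)) = 1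
    rw [hw1, hτ_one]
    rfl
  · intro g h
    apply SemidirectProduct.ext
    · show w (g * h) = w g * (permAut m (τ g)) (w h)
      rw [hw_mul]
      rfl
    · exact hτ_mul g h
  · rw [injective_iff_map_eq_one]
    intro g hg
    have hwg : w g = 1 := congrArg SemidirectProduct.left hg
    have hτg : τ g = 1 := congrArg SemidirectProduct.right hg
    set x₀ : T := QuotientGroup.mk 1 with hx₀
    -- g fixes all cosets
    have hfix : ∀ x : T, g • x = x := by
      intro x
      have j0 : Fin d := ⟨0, hd⟩
      have := congrArg (fun π : Equiv.Perm (Fin m) => π (e (x, j0))) hτg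
      simp only [hτ, hp, Equiv.permCongr_apply, Equiv.symm_apply_apply,
        Equiv.Perm.one_def, Equiv.refl_apply] at this
      have := e.injective this
      have := congrArg Prod.fst this
      simpa [hσ] using this
    have hfix' : g⁻¹ • x₀ = x₀ := by
      conv_lhs => rw [← hfix x₀]
      rw [smul_smul, inv_mul_cancel, one_smul]
    -- the cocycle at x₀ is trivial
    have hn₀ : n g x₀ = 1 := by
      apply hφ
      rw [map_one]
      funext j
      have := congrFun hwg (e (x₀, j))
      simpa [hw, Equiv.symm_apply_apply] using this
    have : x₀.out⁻¹ * g * (g⁻¹ • x₀).out = 1 := congrArg Subtype.val hn₀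
    rw [hfix'] at this
    have := congrArg (fun y => x₀.out * y * x₀.out⁻¹) this
    simpa [mul_assoc] using this

/-- If a finite group `G` has an abelian subgroup `A` of index `s`
which embeds into `GL_d(ℂ)`, then with `m = d·s` the group `G` embeds into the
semidirect product `(ℂ*)^m ⋊ Sym_m` (the group of monomial matrices). -/
theorem stmt8 (G : Type) [Group G] [Finite G] (A : Subgroup G)
    (hA : ∀ x y : A, x * y = y * x) (s : ℕ) (hs : s = A.index)
    (d : ℕ) (hd : 0 < d) (f : A →* Matrix.GeneralLinearGroup (Fin d) ℂ)
    (hf : Function.Injective f) (m : ℕ) (hm : m = d * s) :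
    ∃ g : G →* (Fin m → ℂˣ) ⋊[permAut m] Equiv.Perm (Fin m),
      Function.Injective g := by
  obtain ⟨φ, hφ⟩ := abelian_diag hA d f hf
  exact embed_monomial G A s hs d hd m hm φ hφ
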